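/- Let p, q, r ≥ 0 be real numbers and let α, β, γ be real numbers with α + β + γ = π. Then p + q + r ≥ 2√(qr)·cos α + 2√(pr)·cos β + 2√(pq)·cos γ. -/
import Mathlib

theorem statement0 (p q r α β γ : ℝ) (hp : 0 ≤ p) (hq : 0 ≤ q) (hr : 0 ≤ r)
    (h : α + β + γ = Real.pi) :
    p + q + r ≥ 2 * Real.sqrt (q * r) * Real.cos α + 2 * Real.sqrt (p * r) * Real.cos β +
      2 * Real.sqrt (p * q) * Real.cos γ := by
  have hα : Real.cos α = -(Real.cos β * Real.cos γ - Real.sin β * Real.sin γ) := by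
    rw [show α = Real.pi - (β + γ) by linarith, Real.cos_pi_sub, Real.cos_add]
  have h1 : Real.sqrt (q * r) = Real.sqrt q * Real.sqrt r := Real.sqrt_mul hq r
  have h2 : Real.sqrt (p * r) = Real.sqrt p * Real.sqrt r := Real.sqrt_mul hp r
  have h3 : Real.sqrt (p * q) = Real.sqrt p * Real.sqrt q := Real.sqrt_mul hp q
  have sp := Real.sq_sqrt hp
  have sq' := Real.sq_sqrt hq
  have sr := Real.sq_sqrt hr
  have pb := Real.sin_sq_add_cos_sq β
  have pg := Real.sin_sq_add_cos_sq γ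
  rw [hα, h1, h2, h3]
  nlinarith [sq_nonneg (Real.sqrt p - Real.sqrt q * Real.cos γ - Real.sqrt r * Real.cos β),
    sq_nonneg (Real.sqrt q * Real.sin γ - Real.sqrt r * Real.sin β)]
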